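/- Let A, B, C be subspaces of a finite-dimensional vector space V over a field F, and form the vector v = (dim A, dim B, dim C, dim(A ⊔ B), dim(A ⊔ C), dim(B ⊔ C), dim(A ⊔ B ⊔ C)) ∈ ℝ^7. Then v lies in the convex cone generated by the eight extreme rays r1 = (1,0,0,1,1,0,1), r2 = (0,1,0,1,0,1,1), r3 = (0,0,1,0,1,1,1), r4 = (1,1,0,1,1,1,1), r5 = (1,0,1,1,1,1,1), r6 = (0,1,1,1,1,1,1), r7 = (1,1,1,1,1,1,1), r8 = (1,1,1,2,2,2,2); that is, there exist nonnegative real numbers c_1, …, c_8 with v = c_1·r1 + c_2·r2 + ⋯ + c_8·r8. -/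
import Mathlib


open Module

theorem stmt_12 (F V : Type*) [Field F] [AddCommGroup V] [Module F V]
    [FiniteDimensional F V] (A B C : Submodule F V) :
    ∃ c : Fin 8 → ℝ, (∀ i, 0 ≤ c i) ∧
      (![(finrank F ↥A : ℝ), (finrank F ↥B : ℝ), (finrank F ↥C : ℝ),
          (finrank F ↥(A ⊔ B) : ℝ), (finrank F ↥(A ⊔ C) : ℝ),
          (finrank F ↥(B ⊔ C) : ℝ), (finrank F ↥(A ⊔ B ⊔ C) : ℝ)] : Fin 7 → ℝ)
        = ∑ i : Fin 8, c i •
            (![![1,0,0,1,1,0,1], ![0,1,0,1,0,1,1], ![0,0,1,0,1,1,1],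
               ![1,1,0,1,1,1,1], ![1,0,1,1,1,1,1], ![0,1,1,1,1,1,1],
               ![1,1,1,1,1,1,1], ![1,1,1,2,2,2,2]] : Fin 8 → Fin 7 → ℝ) i := by
  have aux : ∀ X Y Z : Submodule F V, Z ≤ X → Z ≤ Y →
      finrank F ↥(X ⊔ Y) + finrank F ↥Z ≤ finrank F ↥X + finrank F ↥Y := by
    intro X Y Z h1 h2
    have := Submodule.finrank_sup_add_finrank_inf_eq X Y
    have hZ : finrank F ↥Z ≤ finrank F ↥(X ⊓ Y) :=
      Submodule.finrank_mono (le_inf h1 h2)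
    omega
  set a := (finrank F ↥A : ℝ) with ha
  set b := (finrank F ↥B : ℝ) with hb
  set cc := (finrank F ↥C : ℝ) with hcc
  set d := (finrank F ↥(A ⊔ B) : ℝ) with hd
  set e := (finrank F ↥(A ⊔ C) : ℝ) with he
  set f := (finrank F ↥(B ⊔ C) : ℝ) with hf
  set g := (finrank F ↥(A ⊔ B ⊔ C) : ℝ) with hg
  -- monotonicity
  have hdg : d ≤ g := by
    rw [hd, hg]; exact_mod_cast Submodule.finrank_mono (le_sup_left : A ⊔ B ≤ A ⊔ B ⊔ C)
  have heg : e ≤ g := by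
    rw [he, hg]
    exact_mod_cast Submodule.finrank_mono
      (sup_le (le_sup_left.trans le_sup_left) le_sup_right : A ⊔ C ≤ A ⊔ B ⊔ C)
  have hfg : f ≤ g := by
    rw [hf, hg]
    exact_mod_cast Submodule.finrank_mono
      (sup_le (le_sup_right.trans le_sup_left) le_sup_right : B ⊔ C ≤ A ⊔ B ⊔ C)
  -- subadditivity
  have hdab : d ≤ a + b := by
    have h := aux A B ⊥ bot_le bot_le
    rw [finrank_bot] at h
    rw [hd, ha, hb]; exact_mod_cast by omega
  have heac : e ≤ a + cc := by
    have h := aux A C ⊥ bot_le bot_le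
    rw [finrank_bot] at h
    rw [he, ha, hcc]; exact_mod_cast by omega
  have hfbc : f ≤ b + cc := by
    have h := aux B C ⊥ bot_le bot_le
    rw [finrank_bot] at h
    rw [hf, hb, hcc]; exact_mod_cast by omega
  -- submodularity-type inequalities
  have hsub1 : g + cc ≤ e + f := by
    have h := aux (A ⊔ C) (B ⊔ C) C le_sup_right le_sup_right
    have heq : (A ⊔ C) ⊔ (B ⊔ C) = A ⊔ B ⊔ C := by
      rw [sup_sup_sup_comm, sup_idem]
    rw [heq] at h
    rw [hg, hcc, he, hf]; exact_mod_cast h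
  have hsub2 : g + a ≤ d + e := by
    have h := aux (A ⊔ B) (A ⊔ C) A le_sup_left le_sup_left
    have heq : (A ⊔ B) ⊔ (A ⊔ C) = A ⊔ B ⊔ C := by
      rw [sup_sup_sup_comm, sup_idem, sup_assoc]
    rw [heq] at h
    rw [hg, ha, hd, he]; exact_mod_cast h
  have hsub3 : g + b ≤ d + f := by
    have h := aux (A ⊔ B) (B ⊔ C) B le_sup_right le_sup_left
    have heq : (A ⊔ B) ⊔ (B ⊔ C) = A ⊔ B ⊔ C := by
      rw [sup_assoc, ← sup_assoc B B C, sup_idem, ← sup_assoc]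
    rw [heq] at h
    rw [hg, hb, hd, hf]; exact_mod_cast h
  set t : ℝ := a + b + cc + g - d - e - f with ht
  set p : ℝ := max t 0 with hp
  set q : ℝ := max (-t) 0 with hq
  have hp0 : 0 ≤ p := le_max_right _ _
  have hq0 : 0 ≤ q := le_max_right _ _
  have hpq : p - q = t := by
    rcases le_total t 0 with h | h
    · rw [hp, hq, max_eq_right h, max_eq_left (by linarith)]; ring
    · rw [hp, hq, max_eq_left h, max_eq_right (by linarith)]; ring
  refine ⟨![g - f, g - e, g - d, a + b - d - p, a + cc - e - p,
      b + cc - f - p, p, q], ?_, ?_⟩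
  · intro i
    fin_cases i
    · show (0:ℝ) ≤ g - f; linarith
    · show (0:ℝ) ≤ g - e; linarith
    · show (0:ℝ) ≤ g - d; linarith
    · show (0:ℝ) ≤ a + b - d - p
      have : p ≤ a + b - d := max_le (by rw [ht]; linarith) (by linarith)
      linarith
    · show (0:ℝ) ≤ a + cc - e - p
      have : p ≤ a + cc - e := max_le (by rw [ht]; linarith) (by linarith)
      linarith
    · show (0:ℝ) ≤ b + cc - f - p
      have : p ≤ b + cc - f := max_le (by rw [ht]; linarith) (by linarith)
      linarith
    · show (0:ℝ) ≤ p; exact hp0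
    · show (0:ℝ) ≤ q; exact hq0
  · rw [Fin.sum_univ_eight]
    funext j
    fin_cases j
    · show a = (g - f) * 1 + (g - e) * 0 + (g - d) * 0 + (a + b - d - p) * 1 +
          (a + cc - e - p) * 1 + (b + cc - f - p) * 0 + p * 1 + q * 1
      rw [ht] at hpq; linarith
    · show b = (g - f) * 0 + (g - e) * 1 + (g - d) * 0 + (a + b - d - p) * 1 +
          (a + cc - e - p) * 0 + (b + cc - f - p) * 1 + p * 1 + q * 1
      rw [ht] at hpq; linarith
    · show cc = (g - f) * 0 + (g - e) * 0 + (g - d) * 1 + (a + b - d - p) * 0 +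
          (a + cc - e - p) * 1 + (b + cc - f - p) * 1 + p * 1 + q * 1
      rw [ht] at hpq; linarith
    · show d = (g - f) * 1 + (g - e) * 1 + (g - d) * 0 + (a + b - d - p) * 1 +
          (a + cc - e - p) * 1 + (b + cc - f - p) * 1 + p * 1 + q * 2
      rw [ht] at hpq; linarith
    · show e = (g - f) * 1 + (g - e) * 0 + (g - d) * 1 + (a + b - d - p) * 1 +
          (a + cc - e - p) * 1 + (b + cc - f - p) * 1 + p * 1 + q * 2
      rw [ht] at hpq; linarith
    · show f = (g - f) * 0 + (g - e) * 1 + (g - d) * 1 + (a + b - d - p) * 1 +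
          (a + cc - e - p) * 1 + (b + cc - f - p) * 1 + p * 1 + q * 2
      rw [ht] at hpq; linarith
    · show g = (g - f) * 1 + (g - e) * 1 + (g - d) * 1 + (a + b - d - p) * 1 +
          (a + cc - e - p) * 1 + (b + cc - f - p) * 1 + p * 1 + q * 2
      rw [ht] at hpq; linarith
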